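/- Let T : ℝ³ → ℝ³ be twice continuously differentiable with DT(y) invertible for every y, and let B : ℝ³ → ℝ³ be continuously differentiable. Then for every x ∈ ℝ³, (curl B)(T x) = (1 / det DT(x)) · DT(x) · curl( y ↦ (DT(y))ᵀ · B(T y) )(x) (the covariant Piola identity for the curl). -/

import Mathlib

open Matrix

/-- Jacobian matrix of a map `ℝ³ → ℝ³`, with entries `(DT(x))ᵢⱼ = ∂ⱼTᵢ(x)`. -/
noncomputable def jacR (T : (Fin 3 → ℝ) → (Fin 3 → ℝ)) (x : Fin 3 → ℝ) :
    Matrix (Fin 3) (Fin 3) ℝ :=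
  Matrix.of fun i j => fderiv ℝ T x (Pi.single j 1) i

/-- Partial derivative in direction `i` of a field `ℝ³ → ℝ³`. -/
noncomputable def pdR (i : Fin 3) (F : (Fin 3 → ℝ) → (Fin 3 → ℝ)) (x : Fin 3 → ℝ) :
    Fin 3 → ℝ :=
  fderiv ℝ F x (Pi.single i 1)

/-- Curl of a field `ℝ³ → ℝ³`. -/
noncomputable def curlR (F : (Fin 3 → ℝ) → (Fin 3 → ℝ)) (x : Fin 3 → ℝ) : Fin 3 → ℝ :=
  ![pdR 1 F x 2 - pdR 2 F x 1,
    pdR 2 F x 0 - pdR 0 F x 2,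
    pdR 0 F x 1 - pdR 1 F x 0]

section aux

variable (T B : (Fin 3 → ℝ) → (Fin 3 → ℝ)) (x : Fin 3 → ℝ)

open ContinuousLinearMap in
/-- Key computation: partial derivatives of the pulled-back field. -/
theorem piola_key (hT : ContDiff ℝ 2 T) (hB : ContDiff ℝ 1 B) (i j : Fin 3) :
    pdR i (fun y => (jacR T y)ᵀ *ᵥ B (T y)) x j
      = (∑ k, fderiv ℝ (fderiv ℝ T) x (Pi.single i 1) (Pi.single j 1) k * B (T x) k)
        + ∑ k, (fderiv ℝ T x (Pi.single j 1) k) *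
            (fderiv ℝ B (T x) (fderiv ℝ T x (Pi.single i 1)) k) := by
  have hT1 : ContDiff ℝ 1 T := hT.of_le (by norm_num)
  have hT' : ContDiff ℝ 1 (fderiv ℝ T) := hT.fderiv_right (by norm_num)
  set F2 := fderiv ℝ (fderiv ℝ T) x with hF2def
  have hF2 : HasFDerivAt (fderiv ℝ T) F2 x := (hT'.differentiable one_ne_zero x).hasFDerivAt
  have hTx : HasFDerivAt T (fderiv ℝ T x) x := (hT1.differentiable one_ne_zero x).hasFDerivAt
  have hBx : HasFDerivAt B (fderiv ℝ B (T x)) (T x) := (hB.differentiable one_ne_zero (T x)).hasFDerivAt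
  -- derivative of each component of the jacobian applied to a fixed vector
  have hφ : ∀ j k : Fin 3, HasFDerivAt (fun y => fderiv ℝ T y (Pi.single j 1) k)
      ((proj k).comp (((apply ℝ (Fin 3 → ℝ)) ((Pi.single j 1 : Fin 3 → ℝ))).comp F2)) x := by
    intro j k
    exact ((ContinuousLinearMap.proj k : (Fin 3 → ℝ) →L[ℝ] ℝ).hasFDerivAt).comp x
      ((((apply ℝ (Fin 3 → ℝ)) ((Pi.single j 1 : Fin 3 → ℝ))).hasFDerivAt).comp x hF2)
  have hψ : ∀ k : Fin 3, HasFDerivAt (fun y => B (T y) k)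
      ((proj k).comp ((fderiv ℝ B (T x)).comp (fderiv ℝ T x))) x := by
    intro k
    exact ((ContinuousLinearMap.proj k : (Fin 3 → ℝ) →L[ℝ] ℝ).hasFDerivAt).comp x (hBx.comp x hTx)
  -- derivative of each component of the pulled-back field
  set L : Fin 3 → ((Fin 3 → ℝ) →L[ℝ] ℝ) := fun j =>
    ∑ k, ((fderiv ℝ T x (Pi.single j 1) k) •
            ((proj k).comp ((fderiv ℝ B (T x)).comp (fderiv ℝ T x)))
          + (B (T x) k) •
            ((proj k).comp (((apply ℝ (Fin 3 → ℝ)) ((Pi.single j 1 : Fin 3 → ℝ))).comp F2)))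
    with hLdef
  have hG : HasFDerivAt (fun y => (jacR T y)ᵀ *ᵥ B (T y)) (ContinuousLinearMap.pi L) x := by
    apply hasFDerivAt_pi.mpr
    intro j
    have : HasFDerivAt (fun y => ∑ k, fderiv ℝ T y (Pi.single j 1) k * B (T y) k) (L j) x := by
      rw [hLdef]
      exact HasFDerivAt.fun_sum fun k _ => (hφ j k).mul (hψ k)
    convert this using 2 <;> rfl
  rw [pdR, hG.fderiv]
  simp [L, Finset.sum_apply, mul_comm]
  rw [Finset.sum_add_distrib, add_comm]

end aux

/-- Covariant Piola identity for the curl: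
`(curl B)(T x) = (1/det DT(x)) · DT(x) · curl(y ↦ DT(y)ᵀ · B(T y))(x)`. -/
theorem curl_piola_identity
    (T B : (Fin 3 → ℝ) → (Fin 3 → ℝ))
    (hT : ContDiff ℝ 2 T) (hTinv : ∀ y, IsUnit (jacR T y))
    (hB : ContDiff ℝ 1 B) (x : Fin 3 → ℝ) :
    curlR B (T x) =
      ((jacR T x).det)⁻¹ •
        (jacR T x *ᵥ curlR (fun y => (jacR T y)ᵀ *ᵥ B (T y)) x) := by
  have hT1 : ContDiff ℝ 1 T := hT.of_le (by norm_num)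
  have hT' : ContDiff ℝ 1 (fderiv ℝ T) := hT.fderiv_right (by norm_num)
  have hsymm : ∀ v w, fderiv ℝ (fderiv ℝ T) x v w = fderiv ℝ (fderiv ℝ T) x w v :=
    second_derivative_symmetric (fun y => (hT1.differentiable one_ne_zero y).hasFDerivAt)
      ((hT'.differentiable one_ne_zero x).hasFDerivAt)
  have hd : (jacR T x).det ≠ 0 :=
    isUnit_iff_ne_zero.mp ((Matrix.isUnit_iff_isUnit_det _).mp (hTinv x))
  -- expand a linear map applied to a vector over the standard basis
  have hv : ∀ (f : (Fin 3 → ℝ) →L[ℝ] (Fin 3 → ℝ)) (v : Fin 3 → ℝ) (k : Fin 3),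
      f v k = ∑ l, v l * f (Pi.single l 1) k := by
    intro f v k
    have hvv : v = ∑ l, v l • (Pi.single l 1 : Fin 3 → ℝ) := by
      funext m
      simp [Finset.sum_apply, Pi.single_apply]
    conv_lhs => rw [hvv]
    rw [map_sum]
    simp [Finset.sum_apply]
  have hcurlG : ∀ i j : Fin 3,
      pdR i (fun y => (jacR T y)ᵀ *ᵥ B (T y)) x j
        - pdR j (fun y => (jacR T y)ᵀ *ᵥ B (T y)) x i
      = ∑ k, ∑ l,
          (fderiv ℝ T x (Pi.single j 1) k * fderiv ℝ T x (Pi.single i 1) l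
            - fderiv ℝ T x (Pi.single i 1) k * fderiv ℝ T x (Pi.single j 1) l)
            * fderiv ℝ B (T x) (Pi.single l 1) k := by
    intro i j
    rw [piola_key T B x hT hB i j, piola_key T B x hT hB j i, hsymm]
    have h1 : ∀ k, fderiv ℝ B (T x) (fderiv ℝ T x (Pi.single i 1)) k
        = ∑ l, fderiv ℝ T x (Pi.single i 1) l * fderiv ℝ B (T x) (Pi.single l 1) k :=
      fun k => hv _ _ k
    have h2 : ∀ k, fderiv ℝ B (T x) (fderiv ℝ T x (Pi.single j 1)) k
        = ∑ l, fderiv ℝ T x (Pi.single j 1) l * fderiv ℝ B (T x) (Pi.single l 1) k :=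
      fun k => hv _ _ k
    simp only [h1, h2]
    ring_nf
    rw [← Finset.sum_sub_distrib]
    refine Finset.sum_congr rfl fun k _ => ?_
    rw [Finset.mul_sum, Finset.mul_sum, ← Finset.sum_sub_distrib]
    refine Finset.sum_congr rfl fun l _ => ?_
    ring
  obtain ⟨J, hJ⟩ : ∃ J : Fin 3 → Fin 3 → ℝ,
      ∀ a b, fderiv ℝ T x (Pi.single b 1) a = J a b :=
    ⟨fun a b => fderiv ℝ T x (Pi.single b 1) a, fun _ _ => rfl⟩
  obtain ⟨D, hD⟩ : ∃ D : Fin 3 → Fin 3 → ℝ,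
      ∀ l k, fderiv ℝ B (T x) (Pi.single l 1) k = D l k :=
    ⟨fun l k => fderiv ℝ B (T x) (Pi.single l 1) k, fun _ _ => rfl⟩
  simp only [hJ, hD] at hcurlG
  have hc : curlR (fun y => (jacR T y)ᵀ *ᵥ B (T y)) x =
      ![∑ k, ∑ l, (J k 2 * J l 1 - J k 1 * J l 2) * D l k,
        ∑ k, ∑ l, (J k 0 * J l 2 - J k 2 * J l 0) * D l k,
        ∑ k, ∑ l, (J k 1 * J l 0 - J k 0 * J l 1) * D l k] := by
    funext m
    fin_cases m
    · exact hcurlG 1 2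
    · exact hcurlG 2 0
    · exact hcurlG 0 1
  have hcB : curlR B (T x) = ![D 1 2 - D 2 1, D 2 0 - D 0 2, D 0 1 - D 1 0] := by
    funext m
    fin_cases m <;> simp [curlR, pdR, hD]
  rw [hc, hcB]
  funext p
  fin_cases p <;>
  · rw [Pi.smul_apply, smul_eq_mul, eq_comm, inv_mul_eq_iff_eq_mul₀ hd]
    simp only [show (⟨0, by norm_num⟩ : Fin 3) = 0 from rfl,
      show (⟨1, by norm_num⟩ : Fin 3) = 1 from rfl,
      show (⟨2, by norm_num⟩ : Fin 3) = 2 from rfl,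
      Matrix.mulVec, dotProduct, Matrix.det_fin_three, jacR,
      Matrix.of_apply, hJ, hD, Fin.sum_univ_three,
      Matrix.cons_val_zero, Matrix.cons_val_one, Matrix.head_cons,
      Matrix.cons_val_two, Matrix.tail_cons]
    ring
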